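/- Fix κ > 0. The improper integral ∫₀^∞ [ (1_{s≤1}((√(1-s)-1)/s + (√(1+s)-1)/s - √(1-s)/(1-s+κ²)) + 1_{s>1}(√(1+s)/s)) - 1_{s>0}√(1+s)/(1+s+κ²) ] ds converges, and the full limiting expression evaluates so that for d → 0⁺, ∫₀¹ (√(1-s)-1)/s + (√(1+s)-1)/s ds + ∫₀¹ 2/√(s²+d²) ds + ∫₁^∞ √(1+s)/s ds - ∫₀^∞ √(1+s)/(1+s+κ²) ds (interpreted with appropriate cutoffs) equals 2 log(1/d) - 4 + log 64 + κπ + o(1). -/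

import Mathlib

open MeasureTheory Real Set Filter

private lemma hb_deriv' {s : ℝ} (hs : -1 < s) :
    HasDerivAt (fun s : ℝ => Real.sqrt (1 + s)) (1 / (2 * Real.sqrt (1 + s))) s := by
  have h : (1:ℝ) + s ≠ 0 := by linarith
  have := (Real.hasDerivAt_sqrt h).comp s ((hasDerivAt_id s).const_add 1)
  simpa [one_div, Function.comp_def] using this

private lemma ha_deriv' {s : ℝ} (hs : s < 1) :
    HasDerivAt (fun s : ℝ => Real.sqrt (1 - s)) (-(1 / (2 * Real.sqrt (1 - s)))) s := by
  have h : (1:ℝ) - s ≠ 0 := by linarith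
  have := (Real.hasDerivAt_sqrt h).comp s ((hasDerivAt_id s).const_sub 1)
  refine this.congr_deriv ?_
  field_simp

private lemma P1 {s : ℝ} (hs : 0 < s) (hs1 : s < 1) :
    HasDerivAt (fun s : ℝ => 2 * Real.sqrt (1 - s) - 2 * Real.log (1 + Real.sqrt (1 - s)))
      ((Real.sqrt (1 - s) - 1) / s) s := by
  set a := Real.sqrt (1 - s) with hadef
  have ha0 : 0 < a := Real.sqrt_pos.2 (by linarith)
  have ha2 : a ^ 2 = 1 - s := Real.sq_sqrt (by linarith)
  have ha1 : a < 1 := by nlinarith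
  have hd := ha_deriv' hs1
  have dlog : HasDerivAt (fun s : ℝ => Real.log (1 + Real.sqrt (1 - s)))
      ((-(1 / (2 * a))) / (1 + a)) s := by
    have := (Real.hasDerivAt_log (by linarith : 1 + a ≠ 0)).comp s ((hd.const_add 1))
    simpa [div_eq_inv_mul, mul_comm, Function.comp_def] using this
  have H := (hd.const_mul 2).sub (dlog.const_mul 2)
  refine H.congr_deriv ?_
  rw [← hadef]
  have hs' : s = 1 - a ^ 2 := by linarith
  rw [hs']
  have : 1 - a ^ 2 ≠ 0 := by nlinarith
  field_simp
  ring

private lemma P2 {s : ℝ} (hs : 0 < s) :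
    HasDerivAt (fun s : ℝ => 2 * Real.sqrt (1 + s) - 2 * Real.log (1 + Real.sqrt (1 + s)))
      ((Real.sqrt (1 + s) - 1) / s) s := by
  set b := Real.sqrt (1 + s) with hbdef
  have hb0 : 0 < b := Real.sqrt_pos.2 (by linarith)
  have hb2 : b ^ 2 = 1 + s := Real.sq_sqrt (by linarith)
  have hb1 : 1 < b := by nlinarith
  have hd := hb_deriv' (by linarith : (-1:ℝ) < s)
  have dlog : HasDerivAt (fun s : ℝ => Real.log (1 + Real.sqrt (1 + s)))
      ((1 / (2 * b)) / (1 + b)) s := by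
    have := (Real.hasDerivAt_log (by linarith : 1 + b ≠ 0)).comp s ((hd.const_add 1))
    simpa [div_eq_inv_mul, mul_comm, Function.comp_def] using this
  have H := (hd.const_mul 2).sub (dlog.const_mul 2)
  refine H.congr_deriv ?_
  rw [← hbdef]
  have hs' : s = b ^ 2 - 1 := by linarith
  rw [hs']
  have : b ^ 2 - 1 ≠ 0 := by nlinarith
  field_simp
  ring

private lemma P3 (κ : ℝ) (hκ : 0 < κ) {s : ℝ} (hs1 : s < 1) :
    HasDerivAt (fun s : ℝ => -(2 * Real.sqrt (1 - s)) + 2 * κ * Real.arctan (Real.sqrt (1 - s) / κ))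
      (Real.sqrt (1 - s) / (1 - s + κ ^ 2)) s := by
  set a := Real.sqrt (1 - s) with hadef
  have ha0 : 0 ≤ a := Real.sqrt_nonneg _
  have ha2 : a ^ 2 = 1 - s := Real.sq_sqrt (by linarith)
  have hd := ha_deriv' hs1
  have darc : HasDerivAt (fun s : ℝ => Real.arctan (Real.sqrt (1 - s) / κ))
      ((1 / (1 + (a / κ) ^ 2)) * ((-(1 / (2 * a))) / κ)) s := by
    have := (Real.hasDerivAt_arctan (a / κ)).comp s (hd.div_const κ)
    simpa [Function.comp_def] using this
  have H := ((hd.const_mul 2).neg).add (darc.const_mul (2 * κ))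
  refine H.congr_deriv ?_
  rw [← hadef]
  have h1 : (1:ℝ) - s = a ^ 2 := ha2.symm
  rw [h1]
  have ha0' : 0 < a := Real.sqrt_pos.2 (by linarith)
  have hκ0 : κ ≠ 0 := ne_of_gt hκ
  have : 1 + (a / κ) ^ 2 ≠ 0 := by positivity
  have : a ^ 2 + κ ^ 2 ≠ 0 := by positivity
  field_simp
  ring

private lemma P4 (κ : ℝ) (hκ : 0 < κ) {s : ℝ} (hs : -1 < s) :
    HasDerivAt (fun s : ℝ => 2 * Real.sqrt (1 + s) - 2 * κ * Real.arctan (Real.sqrt (1 + s) / κ))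
      (Real.sqrt (1 + s) / (1 + s + κ ^ 2)) s := by
  set b := Real.sqrt (1 + s) with hbdef
  have hb0 : 0 < b := Real.sqrt_pos.2 (by linarith)
  have hb2 : b ^ 2 = 1 + s := Real.sq_sqrt (by linarith)
  have hd := hb_deriv' hs
  have darc : HasDerivAt (fun s : ℝ => Real.arctan (Real.sqrt (1 + s) / κ))
      ((1 / (1 + (b / κ) ^ 2)) * ((1 / (2 * b)) / κ)) s := by
    have := (Real.hasDerivAt_arctan (b / κ)).comp s (hd.div_const κ)
    simpa [Function.comp_def] using this
  have H := (hd.const_mul 2).sub (darc.const_mul (2 * κ))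
  refine H.congr_deriv ?_
  rw [← hbdef]
  have h1 : (1:ℝ) + s = b ^ 2 := hb2.symm
  rw [h1]
  have hκ0 : κ ≠ 0 := ne_of_gt hκ
  have : 1 + (b / κ) ^ 2 ≠ 0 := by positivity
  have : b ^ 2 + κ ^ 2 ≠ 0 := by positivity
  field_simp
  ring

private lemma intA (κ : ℝ) (hκ : 0 < κ) :
    IntegrableOn (fun s : ℝ =>
        (Real.sqrt (1 - s) - 1) / s + (Real.sqrt (1 + s) - 1) / s -
          Real.sqrt (1 - s) / (1 - s + κ ^ 2) - Real.sqrt (1 + s) / (1 + s + κ ^ 2))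
      (Set.Ioo 0 1) volume := by
  refine Measure.integrableOn_of_bounded (M := 1 + 1 + 1 / κ ^ 2 + 2 / κ ^ 2) (by simp) ?_ ?_
  · exact Measurable.aestronglyMeasurable (by fun_prop)
  · rw [ae_restrict_iff' measurableSet_Ioo]
    filter_upwards with s hs
    obtain ⟨hs0, hs1⟩ := hs
    set a := Real.sqrt (1 - s) with hadef
    set b := Real.sqrt (1 + s) with hbdef
    have ha0 : 0 < a := Real.sqrt_pos.2 (by linarith)
    have hb0 : 0 < b := Real.sqrt_pos.2 (by linarith)
    have ha2 : a ^ 2 = 1 - s := Real.sq_sqrt (by linarith)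
    have hb2 : b ^ 2 = 1 + s := Real.sq_sqrt (by linarith)
    have ha1 : a < 1 := by nlinarith
    have hb1 : 1 < b := by nlinarith
    have hb3 : b < 2 := by nlinarith
    have e1 : -1 ≤ (a - 1) / s ∧ (a - 1) / s ≤ 1 := by
      constructor
      · rw [le_div_iff₀ hs0]; nlinarith
      · rw [div_le_iff₀ hs0]; nlinarith
    have e2 : -1 ≤ (b - 1) / s ∧ (b - 1) / s ≤ 1 := by
      constructor
      · rw [le_div_iff₀ hs0]; nlinarith
      · rw [div_le_iff₀ hs0]; nlinarith
    have hd1 : (0:ℝ) < 1 - s + κ ^ 2 := by nlinarith [pow_pos hκ 2]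
    have hd2 : (0:ℝ) < 1 + s + κ ^ 2 := by positivity
    have e3 : 0 ≤ a / (1 - s + κ ^ 2) ∧ a / (1 - s + κ ^ 2) ≤ 1 / κ ^ 2 := by
      constructor
      · exact div_nonneg ha0.le hd1.le
      · rw [div_le_div_iff₀ hd1 (by positivity)]; nlinarith
    have e4 : 0 ≤ b / (1 + s + κ ^ 2) ∧ b / (1 + s + κ ^ 2) ≤ 2 / κ ^ 2 := by
      constructor
      · positivity
      · rw [div_le_div_iff₀ hd2 (by positivity)]; nlinarith
    rw [Real.norm_eq_abs, abs_le]
    constructor <;> [nlinarith [e1.1, e2.1, e3.2, e4.2]; nlinarith [e1.2, e2.2, e3.1, e4.1]]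

private lemma FA_cont (κ : ℝ) : Continuous (fun s : ℝ =>
    (2 * Real.sqrt (1 - s) - 2 * Real.log (1 + Real.sqrt (1 - s)) +
      (2 * Real.sqrt (1 + s) - 2 * Real.log (1 + Real.sqrt (1 + s)))) -
    (-(2 * Real.sqrt (1 - s)) + 2 * κ * Real.arctan (Real.sqrt (1 - s) / κ)) -
    (2 * Real.sqrt (1 + s) - 2 * κ * Real.arctan (Real.sqrt (1 + s) / κ))) := by
  have c1 : Continuous (fun s : ℝ => Real.sqrt (1 - s)) :=
    Real.continuous_sqrt.comp (continuous_const.sub continuous_id)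
  have c2 : Continuous (fun s : ℝ => Real.sqrt (1 + s)) :=
    Real.continuous_sqrt.comp (continuous_const.add continuous_id)
  have l1 : Continuous (fun s : ℝ => Real.log (1 + Real.sqrt (1 - s))) :=
    (continuous_const.add c1).log (fun s => (by positivity : (0:ℝ) < 1 + Real.sqrt (1 - s)).ne')
  have l2 : Continuous (fun s : ℝ => Real.log (1 + Real.sqrt (1 + s))) :=
    (continuous_const.add c2).log (fun s => (by positivity : (0:ℝ) < 1 + Real.sqrt (1 + s)).ne')
  have a1 : Continuous (fun s : ℝ => Real.arctan (Real.sqrt (1 - s) / κ)) :=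
    Real.continuous_arctan.comp (c1.div_const κ)
  have a2 : Continuous (fun s : ℝ => Real.arctan (Real.sqrt (1 + s) / κ)) :=
    Real.continuous_arctan.comp (c2.div_const κ)
  fun_prop

private lemma valA (κ : ℝ) (hκ : 0 < κ) :
    (∫ s in Set.Ioo (0 : ℝ) 1,
        ((Real.sqrt (1 - s) - 1) / s + (Real.sqrt (1 + s) - 1) / s -
          Real.sqrt (1 - s) / (1 - s + κ ^ 2) - Real.sqrt (1 + s) / (1 + s + κ ^ 2))) =
      -2 * Real.log (1 + Real.sqrt 2) + 2 * κ * Real.arctan (Real.sqrt 2 / κ) - 4 +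
        4 * Real.log 2 := by
  rw [← integral_Ioc_eq_integral_Ioo, ← intervalIntegral.integral_of_le (by norm_num : (0:ℝ) ≤ 1)]
  rw [intervalIntegral.integral_eq_sub_of_hasDeriv_right_of_le (by norm_num)
      ((FA_cont κ).continuousOn)
      (fun x hx => (((((P1 hx.1 hx.2).add (P2 hx.1)).sub (P3 κ hκ hx.2)).sub
        (P4 κ hκ (by linarith [hx.1])))).hasDerivWithinAt)
      ((intervalIntegrable_iff_integrableOn_Ioo_of_le (by norm_num)).2 (intA κ hκ))]
  have h0 : Real.sqrt (1 - 1) = 0 := by norm_num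
  have h1 : Real.sqrt (1 + 1) = Real.sqrt 2 := by norm_num
  have h2 : Real.sqrt (1 - 0) = 1 := by norm_num
  have h3 : Real.sqrt (1 + 0) = 1 := by norm_num
  rw [h0, h1, h2, h3]
  simp [Real.log_one, Real.arctan_zero]
  ring_nf

private lemma one_lt_sqrt_two : (1:ℝ) < Real.sqrt 2 := by
  nlinarith [Real.sq_sqrt (by norm_num : (0:ℝ) ≤ 2), Real.sqrt_nonneg 2]

private lemma FB_deriv (κ : ℝ) (hκ : 0 < κ) {s : ℝ} (hs : 1 < s) :
    HasDerivAt (fun s : ℝ => Real.log (Real.sqrt (1 + s) - 1) - Real.log (Real.sqrt (1 + s) + 1)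
        + 2 * κ * Real.arctan (Real.sqrt (1 + s) / κ))
      (Real.sqrt (1 + s) / s - Real.sqrt (1 + s) / (1 + s + κ ^ 2)) s := by
  have h1 : (-1:ℝ) < s := by linarith
  set b := Real.sqrt (1 + s) with hbdef
  have hb0 : 0 < b := Real.sqrt_pos.2 (by linarith)
  have hb2 : b ^ 2 = 1 + s := Real.sq_sqrt (by linarith)
  have hb1 : 1 < b := by nlinarith [hb0]
  have hb : HasDerivAt (fun s : ℝ => Real.sqrt (1 + s)) (1 / (2 * b)) s := hb_deriv' h1
  have d1 : HasDerivAt (fun s : ℝ => Real.log (Real.sqrt (1 + s) - 1))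
      ((1 / (2 * b)) / (b - 1)) s := by
    have := (Real.hasDerivAt_log (by linarith : b - 1 ≠ 0)).comp s (hb.sub_const 1)
    simpa [div_eq_inv_mul, mul_comm, Function.comp_def] using this
  have d2 : HasDerivAt (fun s : ℝ => Real.log (Real.sqrt (1 + s) + 1))
      ((1 / (2 * b)) / (b + 1)) s := by
    have := (Real.hasDerivAt_log (by linarith : b + 1 ≠ 0)).comp s (hb.add_const 1)
    simpa [div_eq_inv_mul, mul_comm, Function.comp_def] using this
  have d3 : HasDerivAt (fun s : ℝ => Real.arctan (Real.sqrt (1 + s) / κ))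
      ((1 / (1 + (b / κ) ^ 2)) * ((1 / (2 * b)) / κ)) s := by
    have := (Real.hasDerivAt_arctan (b / κ)).comp s (hb.div_const κ)
    simpa [Function.comp_def] using this
  have H := (d1.sub d2).add ((d3.const_mul (2 * κ)))
  refine H.congr_deriv ?_
  have hs0 : s ≠ 0 := by linarith
  have hκ0 : κ ≠ 0 := ne_of_gt hκ
  have hden : 1 + s + κ ^ 2 ≠ 0 := by positivity
  have hb10 : b - 1 ≠ 0 := by linarith
  have hb11 : b + 1 ≠ 0 := by linarith
  have h2 : 1 + (b / κ) ^ 2 ≠ 0 := by positivity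
  have hs' : s = b ^ 2 - 1 := by linarith
  rw [hs']
  have hb20 : b ^ 2 - 1 ≠ 0 := by nlinarith
  have : b ^ 2 + κ ^ 2 ≠ 0 := by positivity
  rw [show 1 + (b ^ 2 - 1) + κ ^ 2 = b ^ 2 + κ ^ 2 by ring]
  field_simp
  ring

private lemma FB_contWithin (κ : ℝ) :
    ContinuousWithinAt (fun s : ℝ => Real.log (Real.sqrt (1 + s) - 1)
        - Real.log (Real.sqrt (1 + s) + 1) + 2 * κ * Real.arctan (Real.sqrt (1 + s) / κ))
      (Set.Ici 1) 1 := by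
  apply ContinuousAt.continuousWithinAt
  have c2 : Continuous (fun s : ℝ => Real.sqrt (1 + s)) :=
    Real.continuous_sqrt.comp (continuous_const.add continuous_id)
  have h1 : Real.sqrt (1 + 1) - 1 ≠ 0 := by
    have : Real.sqrt (1 + 1) = Real.sqrt 2 := by norm_num
    rw [this]; linarith [Real.one_lt_sqrt_two]
  have h2 : Real.sqrt (1 + 1) + 1 ≠ 0 := by positivity
  have ca : ContinuousAt (fun s : ℝ => Real.log (Real.sqrt (1 + s) - 1)) 1 :=
    ((c2.continuousAt).sub continuousAt_const).log h1
  have cb : ContinuousAt (fun s : ℝ => Real.log (Real.sqrt (1 + s) + 1)) 1 :=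
    ((c2.continuousAt).add continuousAt_const).log h2
  have cc : ContinuousAt (fun s : ℝ => Real.arctan (Real.sqrt (1 + s) / κ)) 1 :=
    Real.continuous_arctan.continuousAt.comp ((c2.continuousAt).div_const κ)
  exact (ca.sub cb).add (cc.const_mul _)

private lemma FB_tendsto (κ : ℝ) (hκ : 0 < κ) :
    Tendsto (fun s : ℝ => Real.log (Real.sqrt (1 + s) - 1) - Real.log (Real.sqrt (1 + s) + 1)
        + 2 * κ * Real.arctan (Real.sqrt (1 + s) / κ)) atTop (nhds (κ * Real.pi)) := by
  have hsqrt : Tendsto Real.sqrt atTop atTop := by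
    apply tendsto_atTop_atTop.2
    intro b
    refine ⟨max (b ^ 2) 0, fun a ha => ?_⟩
    calc b ≤ |b| := le_abs_self b
    _ = Real.sqrt (b ^ 2) := (Real.sqrt_sq_eq_abs b).symm
    _ ≤ Real.sqrt a := Real.sqrt_le_sqrt (le_trans (le_max_left _ _) ha)
  have hsq : Tendsto (fun s : ℝ => Real.sqrt (1 + s)) atTop atTop :=
    hsqrt.comp (tendsto_atTop_add_const_left _ 1 tendsto_id)
  have h2 : Tendsto (fun s : ℝ => Real.log (Real.sqrt (1 + s) - 1)
      - Real.log (Real.sqrt (1 + s) + 1)) atTop (nhds 0) := by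
    have hfrac : Tendsto (fun s : ℝ => (Real.sqrt (1 + s) - 1) / (Real.sqrt (1 + s) + 1))
        atTop (nhds 1) := by
      have hz : Tendsto (fun s : ℝ => 2 / (Real.sqrt (1 + s) + 1)) atTop (nhds 0) :=
        tendsto_const_nhds.div_atTop (tendsto_atTop_add_const_right _ 1 hsq)
      have h11 : Tendsto (fun s : ℝ => 1 - 2 / (Real.sqrt (1 + s) + 1)) atTop (nhds 1) := by
        have := (tendsto_const_nhds (x := (1:ℝ)) (f := atTop)).sub hz
        rwa [sub_zero] at this
      apply h11.congr'
      filter_upwards [Filter.eventually_ge_atTop (1:ℝ)] with s hs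
      have hb : 1 < Real.sqrt (1 + s) := by
        nlinarith [Real.sq_sqrt (by linarith : (0:ℝ) ≤ 1 + s), Real.sqrt_nonneg (1 + s),
          Real.one_lt_sqrt_two]
      field_simp
      ring
    have hlog : Tendsto (fun s : ℝ =>
        Real.log ((Real.sqrt (1 + s) - 1) / (Real.sqrt (1 + s) + 1))) atTop (nhds 0) := by
      have := (Real.continuousAt_log one_ne_zero).tendsto.comp hfrac
      simpa [Function.comp_def] using this
    apply hlog.congr'
    filter_upwards [Filter.eventually_ge_atTop (1:ℝ)] with s hs
    have hb : 1 < Real.sqrt (1 + s) := by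
      nlinarith [Real.sq_sqrt (by linarith : (0:ℝ) ≤ 1 + s), Real.sqrt_nonneg (1 + s)]
    rw [Real.log_div (by linarith) (by linarith)]
  have h3 : Tendsto (fun s : ℝ => Real.arctan (Real.sqrt (1 + s) / κ)) atTop
      (nhds (Real.pi / 2)) := by
    exact (tendsto_nhds_of_tendsto_nhdsWithin Real.tendsto_arctan_atTop).comp
      (hsq.atTop_div_const hκ)
  have := h2.add ((h3.const_mul (2 * κ)))
  rw [show (0:ℝ) + 2 * κ * (Real.pi / 2) = κ * Real.pi by ring] at this
  exact this

private lemma FB_nonneg (κ : ℝ) {x : ℝ} (hx : 1 < x) :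
    0 ≤ Real.sqrt (1 + x) / x - Real.sqrt (1 + x) / (1 + x + κ ^ 2) := by
  rw [sub_nonneg]
  exact div_le_div_of_nonneg_left (Real.sqrt_nonneg _) (by linarith) (by nlinarith [sq_nonneg κ])

private lemma intB (κ : ℝ) (hκ : 0 < κ) :
    IntegrableOn (fun s : ℝ =>
        Real.sqrt (1 + s) / s - Real.sqrt (1 + s) / (1 + s + κ ^ 2)) (Set.Ioi 1) volume :=
  integrableOn_Ioi_deriv_of_nonneg (FB_contWithin κ) (fun x hx => FB_deriv κ hκ hx)
    (fun x hx => FB_nonneg κ hx) (FB_tendsto κ hκ)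

private lemma valB (κ : ℝ) (hκ : 0 < κ) :
    (∫ s in Set.Ioi (1 : ℝ),
        (Real.sqrt (1 + s) / s - Real.sqrt (1 + s) / (1 + s + κ ^ 2))) =
      κ * Real.pi - (Real.log (Real.sqrt 2 - 1) - Real.log (Real.sqrt 2 + 1)
        + 2 * κ * Real.arctan (Real.sqrt 2 / κ)) := by
  rw [integral_Ioi_of_hasDerivAt_of_nonneg (FB_contWithin κ) (fun x hx => FB_deriv κ hκ hx)
    (fun x hx => FB_nonneg κ hx) (FB_tendsto κ hκ)]
  norm_num

private lemma valI {d : ℝ} (hd : 0 < d) :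
    (∫ s in Set.Ioo (0 : ℝ) 1, 2 / Real.sqrt (s ^ 2 + d ^ 2)) = 2 * Real.arsinh (1 / d) := by
  rw [← integral_Ioc_eq_integral_Ioo, ← intervalIntegral.integral_of_le (by norm_num : (0:ℝ) ≤ 1)]
  have key : ∀ s : ℝ, HasDerivAt (fun s : ℝ => 2 * Real.arsinh (s / d))
      (2 / Real.sqrt (s ^ 2 + d ^ 2)) s := by
    intro s
    have h := ((Real.hasDerivAt_arsinh (s / d)).comp s ((hasDerivAt_id s).div_const d)).const_mul 2
    refine h.congr_deriv ?_
    have hsqrt : Real.sqrt (s ^ 2 + d ^ 2) = d * Real.sqrt (1 + (s / d) ^ 2) := by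
      rw [← Real.sqrt_sq hd.le, ← Real.sqrt_mul (by positivity)]
      congr 1
      field_simp
      simp only [Real.sqrt_sq hd.le]
      ring
    rw [hsqrt]
    have h1 : Real.sqrt (1 + (s / d) ^ 2) ≠ 0 := by positivity
    field_simp
  rw [intervalIntegral.integral_eq_sub_of_hasDerivAt (fun x _ => key x)
    (((continuous_const.div (by fun_prop) (fun s => by positivity)).intervalIntegrable 0 1))]
  simp [Real.arsinh_zero]

private lemma final_limit (κ : ℝ) (A B : ℝ)
    (hAB : A + B = -4 + 4 * Real.log 2 + κ * Real.pi) :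
    Filter.Tendsto (fun d : ℝ =>
        ((A + (2 * Real.arsinh (1 / d)) + B)) -
          (2 * Real.log (1 / d) - 4 + Real.log 64 + κ * Real.pi))
      (nhdsWithin 0 (Set.Ioi 0)) (nhds 0) := by
  have hlog64 : Real.log 64 = 6 * Real.log 2 := by
    rw [show (64:ℝ) = 2 ^ 6 by norm_num, Real.log_pow]
    norm_num
  have hcont : Tendsto (fun d : ℝ => 2 * Real.log (1 + Real.sqrt (1 + d ^ 2)) - 2 * Real.log 2)
      (nhdsWithin 0 (Set.Ioi 0)) (nhds 0) := by
    have hC : ContinuousAt (fun d : ℝ => 2 * Real.log (1 + Real.sqrt (1 + d ^ 2))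
        - 2 * Real.log 2) 0 := by
      have c1 : ContinuousAt (fun d : ℝ => 1 + Real.sqrt (1 + d ^ 2)) 0 := by fun_prop
      have h0 : (1:ℝ) + Real.sqrt (1 + 0 ^ 2) ≠ 0 := by positivity
      exact ((c1.log h0).const_mul 2).sub continuousAt_const
    have : Tendsto (fun d : ℝ => 2 * Real.log (1 + Real.sqrt (1 + d ^ 2)) - 2 * Real.log 2)
        (nhdsWithin 0 (Set.Ioi 0))
        (nhds (2 * Real.log (1 + Real.sqrt (1 + (0:ℝ) ^ 2)) - 2 * Real.log 2)) :=
      hC.tendsto.mono_left nhdsWithin_le_nhds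
    have hval : 2 * Real.log (1 + Real.sqrt (1 + (0:ℝ) ^ 2)) - 2 * Real.log 2 = 0 := by
      norm_num
    rwa [hval] at this
  apply hcont.congr'
  filter_upwards [self_mem_nhdsWithin] with d hd
  have hd0 : (0:ℝ) < d := hd
  have harsinh : Real.arsinh (1 / d) = Real.log (1 + Real.sqrt (1 + d ^ 2)) - Real.log d := by
    rw [Real.arsinh]
    have hsqrt : Real.sqrt (1 + (1 / d) ^ 2) = Real.sqrt (1 + d ^ 2) / d := by
      rw [eq_div_iff (ne_of_gt hd0), ← Real.sqrt_sq hd0.le, ← Real.sqrt_mul (by positivity)]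
      congr 1
      field_simp
      simp only [Real.sqrt_sq hd0.le]
      ring
    rw [hsqrt, ← add_div, ← Real.log_div (by positivity) (ne_of_gt hd0)]
  rw [harsinh, hlog64, Real.log_div one_ne_zero (ne_of_gt hd0), Real.log_one]
  linarith [hAB]

theorem mMu_integral_asymptotics (κ : ℝ) (hκ : 0 < κ) :
    IntegrableOn (fun s : ℝ =>
        (Real.sqrt (1 - s) - 1) / s + (Real.sqrt (1 + s) - 1) / s -
          Real.sqrt (1 - s) / (1 - s + κ ^ 2) - Real.sqrt (1 + s) / (1 + s + κ ^ 2))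
      (Set.Ioo 0 1) volume ∧
    IntegrableOn (fun s : ℝ =>
        Real.sqrt (1 + s) / s - Real.sqrt (1 + s) / (1 + s + κ ^ 2)) (Set.Ioi 1) volume ∧
    Filter.Tendsto (fun d : ℝ =>
        ((∫ s in Set.Ioo (0 : ℝ) 1,
            ((Real.sqrt (1 - s) - 1) / s + (Real.sqrt (1 + s) - 1) / s -
              Real.sqrt (1 - s) / (1 - s + κ ^ 2) - Real.sqrt (1 + s) / (1 + s + κ ^ 2))) +
          (∫ s in Set.Ioo (0 : ℝ) 1, 2 / Real.sqrt (s ^ 2 + d ^ 2)) +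
          (∫ s in Set.Ioi (1 : ℝ),
            (Real.sqrt (1 + s) / s - Real.sqrt (1 + s) / (1 + s + κ ^ 2)))) -
          (2 * Real.log (1 / d) - 4 + Real.log 64 + κ * Real.pi))
      (nhdsWithin 0 (Set.Ioi 0)) (nhds 0) := by
  refine ⟨intA κ hκ, intB κ hκ, ?_⟩
  have hs2 : Real.sqrt 2 * Real.sqrt 2 = 2 := Real.mul_self_sqrt (by norm_num)
  have hlogs : Real.log (Real.sqrt 2 - 1) + Real.log (Real.sqrt 2 + 1) = 0 := by
    rw [← Real.log_mul (by nlinarith [Real.one_lt_sqrt_two]) (by nlinarith [Real.one_lt_sqrt_two]),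
      show (Real.sqrt 2 - 1) * (Real.sqrt 2 + 1) = 1 by nlinarith [hs2], Real.log_one]
  have hAB : (-2 * Real.log (1 + Real.sqrt 2) + 2 * κ * Real.arctan (Real.sqrt 2 / κ) - 4 +
        4 * Real.log 2) +
      (κ * Real.pi - (Real.log (Real.sqrt 2 - 1) - Real.log (Real.sqrt 2 + 1)
        + 2 * κ * Real.arctan (Real.sqrt 2 / κ))) = -4 + 4 * Real.log 2 + κ * Real.pi := by
    have h12 : Real.log (1 + Real.sqrt 2) = Real.log (Real.sqrt 2 + 1) := by ring_nf
    rw [h12]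
    linarith [hlogs]
  apply (final_limit κ _ _ hAB).congr'
  filter_upwards [self_mem_nhdsWithin] with d hd
  rw [valA κ hκ, valB κ hκ, valI hd]
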